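/- arXiv:1903.05430 — 3 statements merged into one kernel-verified Lean document; each statement's English description precedes it below -/
import Mathlib

section
/- Let N ≥ 1 and let S ⊆ ℤ^N be a subset such that for infinitely many integers m ≥ 2, the reduction of S modulo m is all of (ℤ/mℤ)^N. If f ∈ ℂ[x₁,…,x_N] is a polynomial vanishing on every point of S, then f = 0. -/
/-- A polynomial over ℂ vanishing on a set of integer points whose reduction
modulo `m` is all of `(ℤ/mℤ)^N` for infinitely many `m ≥ 2` must be zero. -/
theorem stmt_0 (N : ℕ) (hN : 1 ≤ N) (S : Set (Fin N → ℤ))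
    (hS : {m : ℕ | 2 ≤ m ∧
      ∀ v : Fin N → ZMod m, ∃ s ∈ S, ∀ i, ((s i : ℤ) : ZMod m) = v i}.Infinite)
    (f : MvPolynomial (Fin N) ℂ)
    (hf : ∀ s ∈ S, MvPolynomial.eval (fun i => ((s i : ℤ) : ℂ)) f = 0) :
    f = 0 := by
  by_contra hf0
  obtain ⟨α, hα⟩ : ∃ α, MvPolynomial.coeff α f ≠ 0 := by
    by_contra h
    push_neg at h
    exact hf0 (MvPolynomial.ext _ _ fun d => by simpa using h d)
  have hαs : α ∈ f.support := MvPolynomial.mem_support_iff.mpr hα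
  -- rational functional separating the nonzero coefficient
  set B := Module.Basis.ofVectorSpace ℚ ℂ with hB
  obtain ⟨b, hb⟩ : ∃ b, B.repr (MvPolynomial.coeff α f) b ≠ 0 := by
    by_contra h
    push_neg at h
    apply hα
    have : B.repr (MvPolynomial.coeff α f) = 0 := Finsupp.ext h
    simpa using congrArg B.repr.symm this
  set π : ℂ →ₗ[ℚ] ℚ := B.coord b with hπ
  have hπα : π (MvPolynomial.coeff α f) ≠ 0 := hb
  set q : ((Fin N) →₀ ℕ) → ℚ := fun d => π (MvPolynomial.coeff d f) with hq
  set D : ℕ := ∏ d ∈ f.support, (q d).den with hD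
  have hDpos : 0 < D := Finset.prod_pos fun d _ => (q d).pos
  have hden : ∀ d ∈ f.support, ((q d).den : ℕ) ∣ D := fun d hd =>
    Finset.dvd_prod_of_mem _ hd
  set c : ((Fin N) →₀ ℕ) → ℤ := fun d => (D / (q d).den : ℕ) * (q d).num with hc
  -- key: (c d : ℚ) = D * q d for d ∈ support
  have hcq : ∀ d ∈ f.support, ((c d : ℤ) : ℚ) = (D : ℚ) * q d := by
    intro d hd
    have h1 : ((D / (q d).den : ℕ) : ℚ) * ((q d).den : ℚ) = (D : ℚ) := by
      rw [← Nat.cast_mul, Nat.div_mul_cancel (hden d hd)]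
    have h2 : q d * ((q d).den : ℚ) = (q d).num := Rat.mul_den_eq_num _
    simp only [hc]
    push_cast
    calc ((D / (q d).den : ℕ) : ℚ) * ((q d).num : ℚ)
        = ((D / (q d).den : ℕ) : ℚ) * (q d * ((q d).den : ℚ)) := by rw [h2]
      _ = (((D / (q d).den : ℕ) : ℚ) * ((q d).den : ℚ)) * q d := by ring
      _ = (D : ℚ) * q d := by rw [h1]
  set h : MvPolynomial (Fin N) ℤ := ∑ d ∈ f.support, MvPolynomial.monomial d (c d) with hh
  -- evaluation of h at integer points
  have heval : ∀ x : Fin N → ℤ,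
      ((MvPolynomial.eval x h : ℤ) : ℚ) = (D : ℚ) * π (MvPolynomial.eval (fun i => ((x i : ℤ) : ℂ)) f) := by
    intro x
    have hfe : MvPolynomial.eval (fun i => ((x i : ℤ) : ℂ)) f
        = ∑ d ∈ f.support, MvPolynomial.coeff d f * ((∏ i ∈ d.support, x i ^ d i : ℤ) : ℂ) := by
      rw [MvPolynomial.eval_eq]
      congr 1; funext d
      push_cast; ring
    have hπf : π (MvPolynomial.eval (fun i => ((x i : ℤ) : ℂ)) f)
        = ∑ d ∈ f.support, q d * ((∏ i ∈ d.support, x i ^ d i : ℤ) : ℚ) := by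
      rw [hfe, map_sum]
      congr 1; funext d
      have : MvPolynomial.coeff d f * ((∏ i ∈ d.support, x i ^ d i : ℤ) : ℂ)
          = (∏ i ∈ d.support, x i ^ d i : ℤ) • MvPolynomial.coeff d f := by
        rw [zsmul_eq_mul]; ring
      rw [this, map_zsmul, zsmul_eq_mul]; ring
    rw [hh, map_sum, Int.cast_sum, hπf, Finset.mul_sum]
    refine Finset.sum_congr rfl fun d hd => ?_
    rw [MvPolynomial.eval_monomial, Finsupp.prod, Int.cast_mul, hcq d hd]
    ring
  have hhS : ∀ s ∈ S, MvPolynomial.eval s h = 0 := by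
    intro s hs
    have := heval s
    rw [hf s hs, map_zero, mul_zero] at this
    exact_mod_cast this
  have hhv : ∀ v : Fin N → ℤ, MvPolynomial.eval v h = 0 := by
    intro v
    by_contra hv
    obtain ⟨m, hm, hlt⟩ := hS.exists_gt (MvPolynomial.eval v h).natAbs
    obtain ⟨hm2, hsurj⟩ := hm
    obtain ⟨s, hsS, hse⟩ := hsurj (fun i => ((v i : ℤ) : ZMod m))
    have hcast : ∀ x : Fin N → ℤ, ((MvPolynomial.eval x h : ℤ) : ZMod m)
        = MvPolynomial.eval₂ (Int.castRingHom (ZMod m)) (fun i => ((x i : ℤ) : ZMod m)) h := by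
      intro x
      have key := MvPolynomial.eval₂_comp_left (Int.castRingHom (ZMod m)) (RingHom.id ℤ) x h
      rw [MvPolynomial.eval₂_id, RingHom.comp_id] at key
      simp only [Int.coe_castRingHom, Function.comp] at key
      exact key
    have hz : ((MvPolynomial.eval v h : ℤ) : ZMod m) = 0 := by
      rw [hcast v]
      have he : (fun i => ((v i : ℤ) : ZMod m)) = fun i => ((s i : ℤ) : ZMod m) :=
        funext fun i => (hse i).symm
      rw [he, ← hcast s, hhS s hsS, Int.cast_zero]
    have hdvd : (m : ℤ) ∣ MvPolynomial.eval v h :=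
      (ZMod.intCast_zmod_eq_zero_iff_dvd _ _).mp hz
    exact hv (Int.eq_zero_of_dvd_of_natAbs_lt_natAbs hdvd (by simpa using hlt))
  have hh0 : h = 0 := MvPolynomial.funext fun x => by rw [hhv x, map_zero]
  have hcoeff : MvPolynomial.coeff α h = c α := by
    rw [hh, MvPolynomial.coeff_sum, Finset.sum_eq_single α]
    · simp [MvPolynomial.coeff_monomial]
    · intro d hd hne
      simp [MvPolynomial.coeff_monomial, hne]
    · intro habs; exact absurd hαs habs
  have hcα : c α ≠ 0 := by
    have hk : (D / (q α).den : ℕ) ≠ 0 := by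
      have := Nat.div_pos (Nat.le_of_dvd hDpos (hden α hαs)) (q α).pos
      omega
    have hnum : (q α).num ≠ 0 := Rat.num_ne_zero.mpr hπα
    simp only [hc]
    exact mul_ne_zero (by exact_mod_cast hk) hnum
  rw [hh0] at hcoeff
  simp only [MvPolynomial.coeff_zero] at hcoeff
  exact hcα hcoeff.symm
end

section
/- Let N ≥ 1 and let S ⊆ ℤ^N be a subset whose reduction modulo m is all of (ℤ/mℤ)^N for infinitely many integers m ≥ 2. If f ∈ ℤ[x₁,…,x_N] vanishes on S, then f = 0. -/
/-- Integral-coefficient case: a polynomial over ℤ vanishing on a set of integer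
points whose reduction modulo `m` is all of `(ℤ/mℤ)^N` for infinitely many
`m ≥ 2` must be zero. -/
theorem stmt_1 (N : ℕ) (hN : 1 ≤ N) (S : Set (Fin N → ℤ))
    (hS : {m : ℕ | 2 ≤ m ∧
      ∀ v : Fin N → ZMod m, ∃ s ∈ S, ∀ i, ((s i : ℤ) : ZMod m) = v i}.Infinite)
    (f : MvPolynomial (Fin N) ℤ)
    (hf : ∀ s ∈ S, MvPolynomial.eval (fun i => s i) f = 0) :
    f = 0 := by
  apply MvPolynomial.funext
  intro v
  rw [map_zero]
  set n := MvPolynomial.eval v f with hn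
  by_contra hne
  obtain ⟨m, hm, hlt⟩ := hS.exists_gt n.natAbs
  obtain ⟨hm2, hsurj⟩ := hm
  obtain ⟨s, hsS, hsv⟩ := hsurj (fun i => ((v i : ℤ) : ZMod m))
  have hm0 : (m : ℕ) ≠ 0 := by omega
  have key : ((n : ℤ) : ZMod m) = 0 := by
    have h1 : ((n : ℤ) : ZMod m)
        = MvPolynomial.eval₂ (Int.castRingHom (ZMod m))
            (fun i => ((v i : ℤ) : ZMod m)) f := by
      rw [hn]
      exact (MvPolynomial.eval₂_comp_left (Int.castRingHom (ZMod m))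
        (RingHom.id ℤ) v f).trans (by rw [RingHom.comp_id]; rfl)
    have h2 : ((MvPolynomial.eval (fun i => s i) f : ℤ) : ZMod m)
        = MvPolynomial.eval₂ (Int.castRingHom (ZMod m))
            (fun i => ((s i : ℤ) : ZMod m)) f := by
      exact (MvPolynomial.eval₂_comp_left (Int.castRingHom (ZMod m))
        (RingHom.id ℤ) (fun i => s i) f).trans (by rw [RingHom.comp_id]; rfl)
    rw [h1, show (fun i => ((v i : ℤ) : ZMod m)) = fun i => ((s i : ℤ) : ZMod m)
        from _root_.funext fun i => (hsv i).symm, ← h2, hf s hsS]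
    simp
  rw [ZMod.intCast_zmod_eq_zero_iff_dvd] at key
  have h3 : (m : ℤ) ≤ (n.natAbs : ℤ) := Int.le_of_dvd
    (by exact_mod_cast Int.natAbs_pos.mpr hne) (Int.dvd_natAbs.mpr key)
  omega
end

section
/- Suppose that for every m ≥ 2 and every tuple (h^{p,q}) ∈ (ℤ/mℤ)^{N} indexed by a fundamental domain of the Hodge symmetries with h^{0,0} = 1, there exists an integer point in S ⊆ ℤ^N reducing to it modulo m, where S is a fixed set of integer tuples (the realizable Hodge diamonds). Then any polynomial f ∈ ℂ[x₁,…,x_N] vanishing on S is identically zero after restricting to the affine hyperplane {x₀ = 1} corresponding to h^{0,0} = 1; equivalently, there are no nonzero polynomial relations among the remaining N-1 coordinates of points of S. -/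
open MvPolynomial

private lemma cast_eval' {R : Type*} [CommRing R] (φ : ℤ →+* R) {σ : Type*} (a : σ → ℤ)
    (h : MvPolynomial σ ℤ) : φ (eval a h) = eval (fun i => φ (a i)) (map φ h) := by
  have : eval a h = eval₂ (RingHom.id ℤ) a h := rfl
  rw [this, eval₂_comp_left φ (RingHom.id ℤ) a h, RingHom.comp_id, eval₂_eq_eval_map]
  rfl

private lemma int_lemma {σ : Type*} (T : Set (σ → ℤ))
    (hT : ∀ m : ℕ, 2 ≤ m → ∀ v : σ → ZMod m, ∃ t ∈ T, ∀ i, ((t i : ℤ) : ZMod m) = v i)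
    (h : MvPolynomial σ ℤ) (hv : ∀ t ∈ T, eval t h = 0) : h = 0 := by
  have key : ∀ a : σ → ℤ, eval a h = 0 := by
    intro a
    by_contra hne
    set x := eval a h with hx
    set m : ℕ := x.natAbs + 2 with hm
    obtain ⟨t, htT, ht⟩ := hT m (by omega) (fun i => ((a i : ℤ) : ZMod m))
    have h1 : ((x : ℤ) : ZMod m) = ((eval t h : ℤ) : ZMod m) := by
      have e1 := cast_eval' (Int.castRingHom (ZMod m)) a h
      have e2 := cast_eval' (Int.castRingHom (ZMod m)) t h
      simp only [Int.coe_castRingHom] at e1 e2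
      have hfun : (fun i => ((t i : ℤ) : ZMod m)) = fun i => ((a i : ℤ) : ZMod m) :=
        funext ht
      rw [hx, e1, e2, hfun]
    rw [hv t htT] at h1
    push_cast at h1
    have hdvd : (m : ℤ) ∣ x := (ZMod.intCast_zmod_eq_zero_iff_dvd x m).mp h1
    have habs : (m : ℤ) ≤ |x| := Int.le_of_dvd (abs_pos.mpr hne) ((dvd_abs _ _).mpr hdvd)
    rw [Int.abs_eq_natAbs] at habs
    omega
  apply MvPolynomial.funext (q := 0)
  intro x
  rw [key x, map_zero]

private lemma rat_lemma {σ : Type*} (T : Set (σ → ℤ))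
    (hT : ∀ m : ℕ, 2 ≤ m → ∀ v : σ → ZMod m, ∃ t ∈ T, ∀ i, ((t i : ℤ) : ZMod m) = v i)
    (g : MvPolynomial σ ℚ) (hv : ∀ t ∈ T, eval (fun i => ((t i : ℤ) : ℚ)) g = 0) : g = 0 := by
  classical
  set d : ℕ := ∏ m ∈ g.support, (coeff m g).den with hd
  have hd0 : (d : ℚ) ≠ 0 := by
    have : d ≠ 0 := Finset.prod_ne_zero_iff.mpr fun m _ => (coeff m g).den_nz
    exact_mod_cast this
  have hint : ∀ m ∈ g.support, ((((d : ℚ) * coeff m g).num : ℤ) : ℚ) = (d : ℚ) * coeff m g := by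
    intro m hm
    have hdvd : (coeff m g).den ∣ d := Finset.dvd_prod_of_mem _ hm
    obtain ⟨k, hk⟩ := hdvd
    have hz : ((k * (coeff m g).num : ℤ) : ℚ) = (d : ℚ) * coeff m g := by
      have hden : ((coeff m g).den : ℚ) ≠ 0 := by
        exact_mod_cast (coeff m g).den_nz
      rw [hk]
      push_cast
      nth_rewrite 3 [← Rat.num_div_den (coeff m g)]
      field_simp
    rw [← hz, Rat.num_intCast]
  set h : MvPolynomial σ ℤ :=
    ∑ m ∈ g.support, monomial m (((d : ℚ) * coeff m g).num) with hh
  have hmap : map (Int.castRingHom ℚ) h = C (d : ℚ) * g := by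
    rw [hh, map_sum]
    conv_rhs => rw [← support_sum_monomial_coeff g, Finset.mul_sum]
    apply Finset.sum_congr rfl
    intro m hm
    rw [map_monomial, C_mul_monomial]
    congr 1
    simpa using hint m hm
  have hzero : ∀ t ∈ T, eval t h = 0 := by
    intro t htT
    have e := cast_eval' (Int.castRingHom ℚ) t h
    rw [hmap] at e
    simp only [Int.coe_castRingHom] at e
    rw [map_mul, eval_C, hv t htT, mul_zero] at e
    exact_mod_cast e
  have h0 : h = 0 := int_lemma T hT h hzero
  rw [h0, map_zero] at hmap
  rcases mul_eq_zero.mp hmap.symm with hc | hg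
  · exact absurd hc (by simpa using hd0)
  · exact hg

private lemma complex_lemma {σ : Type*} (T : Set (σ → ℤ))
    (hT : ∀ m : ℕ, 2 ≤ m → ∀ v : σ → ZMod m, ∃ t ∈ T, ∀ i, ((t i : ℤ) : ZMod m) = v i)
    (g : MvPolynomial σ ℂ) (hv : ∀ t ∈ T, eval (fun i => ((t i : ℤ) : ℂ)) g = 0) : g = 0 := by
  classical
  set b := Module.Basis.ofVectorSpace ℚ ℂ with hb
  have coeff_zero : ∀ m₀ ∈ g.support, coeff m₀ g = 0 := by
    intro m₀ hm₀
    have repr_zero : ∀ j, b.repr (coeff m₀ g) j = 0 := by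
      intro j
      set L : ℂ →ₗ[ℚ] ℚ := (Finsupp.lapply j).comp b.repr.toLinearMap with hL
      set gj : MvPolynomial σ ℚ :=
        ∑ m ∈ g.support, monomial m (L (coeff m g)) with hgj
      have hvj : ∀ t ∈ T, eval (fun i => ((t i : ℤ) : ℚ)) gj = 0 := by
        intro t htT
        have h0 := hv t htT
        rw [eval_eq] at h0
        have hterm : ∀ m ∈ g.support,
            coeff m g * ∏ i ∈ m.support, ((t i : ℤ) : ℂ) ^ m i
              = (∏ i ∈ m.support, (t i) ^ m i : ℤ) • coeff m g := by
          intro m _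
          rw [zsmul_eq_mul, mul_comm]
          congr 1
          push_cast
          ring
        rw [Finset.sum_congr rfl hterm] at h0
        have := congrArg L h0
        rw [map_sum, map_zero] at this
        rw [hgj, map_sum]
        rw [← this]
        apply Finset.sum_congr rfl
        intro m hm
        rw [eval_monomial, map_zsmul, zsmul_eq_mul]
        rw [Finsupp.prod]
        push_cast
        ring
      have hgj0 : gj = 0 := rat_lemma T hT gj hvj
      have hc : coeff m₀ gj = L (coeff m₀ g) := by
        rw [hgj, MvPolynomial.coeff_sum, Finset.sum_eq_single m₀]
        · simp [coeff_monomial]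
        · intro m _ hne
          simp [coeff_monomial, hne]
        · intro habs
          exact absurd hm₀ habs
      rw [hgj0, coeff_zero] at hc
      exact hc.symm
    have : b.repr (coeff m₀ g) = 0 := Finsupp.ext repr_zero
    have := b.repr.map_eq_zero_iff.mp this
    exact this
  have : g.support = ∅ := by
    rw [Finset.eq_empty_iff_forall_notMem]
    intro m hm
    exact MvPolynomial.mem_support_iff.mp hm (coeff_zero m hm)
  exact support_eq_empty.mp this

/-- If `S ⊆ ℤ^N` has first coordinate (the value `h^{0,0}`) always `1` and is
surjective modulo every `m ≥ 2` onto tuples with first coordinate `1`, then any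
complex polynomial vanishing on `S` becomes zero after substituting `x₀ = 1`;
equivalently, there are no nonzero polynomial relations among the remaining
`N-1` coordinates of points of `S`. -/
theorem stmt_19 (N : ℕ) (hN : 0 < N) (S : Set (Fin N → ℤ))
    (h00 : ∀ s ∈ S, s ⟨0, hN⟩ = 1)
    (hsurj : ∀ m : ℕ, 2 ≤ m → ∀ v : Fin N → ZMod m, v ⟨0, hN⟩ = 1 →
      ∃ s ∈ S, ∀ i, ((s i : ℤ) : ZMod m) = v i) :
    (∀ f : MvPolynomial (Fin N) ℂ,
      (∀ s ∈ S, MvPolynomial.eval (fun i => ((s i : ℤ) : ℂ)) f = 0) →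
      MvPolynomial.aeval
        (fun i : Fin N => if i = ⟨0, hN⟩ then (1 : MvPolynomial (Fin N) ℂ)
          else MvPolynomial.X i) f = 0) ∧
    (∀ g : MvPolynomial {i : Fin N // i ≠ ⟨0, hN⟩} ℂ,
      (∀ s ∈ S, MvPolynomial.eval (fun i => ((s i.1 : ℤ) : ℂ)) g = 0) →
      g = 0) := by
  classical
  set σ' := {i : Fin N // i ≠ ⟨0, hN⟩}
  set T : Set (σ' → ℤ) := {t | ∃ s ∈ S, ∀ i : σ', s i.1 = t i} with hTdef
  have hT : ∀ m : ℕ, 2 ≤ m → ∀ v : σ' → ZMod m, ∃ t ∈ T, ∀ i, ((t i : ℤ) : ZMod m) = v i := by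
    intro m hm v
    obtain ⟨s, hsS, hs⟩ := hsurj m hm
      (fun i => if h : i = ⟨0, hN⟩ then 1 else v ⟨i, h⟩) (by simp)
    refine ⟨fun i => s i.1, ⟨s, hsS, fun _ => rfl⟩, ?_⟩
    intro i
    simpa [i.2] using hs i.1
  have part2 : ∀ g : MvPolynomial σ' ℂ,
      (∀ s ∈ S, MvPolynomial.eval (fun i => ((s i.1 : ℤ) : ℂ)) g = 0) → g = 0 := by
    intro g hg
    apply complex_lemma T hT g
    rintro t ⟨s, hsS, hst⟩
    have hfun : (fun i : σ' => ((t i : ℤ) : ℂ)) = fun i => ((s i.1 : ℤ) : ℂ) := by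
      funext i
      rw [hst i]
    rw [hfun]
    exact hg s hsS
  refine ⟨?_, part2⟩
  intro f hf
  set u : Fin N → MvPolynomial (Fin N) ℂ :=
    fun i => if i = ⟨0, hN⟩ then (1 : MvPolynomial (Fin N) ℂ) else X i with hu
  set G : MvPolynomial σ' ℂ :=
    aeval (fun i : Fin N => if h : i = ⟨0, hN⟩ then (1 : MvPolynomial σ' ℂ)
      else X (⟨i, h⟩ : σ')) f with hG
  have hren : rename (Subtype.val : σ' → Fin N) G = aeval u f := by
    rw [hG, comp_aeval_apply]
    have hfn : (fun i => rename (Subtype.val : σ' → Fin N)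
        (if h : i = ⟨0, hN⟩ then (1 : MvPolynomial σ' ℂ) else X ⟨i, h⟩)) = u := by
      funext i
      by_cases h : i = ⟨0, hN⟩
      · rw [dif_pos h, map_one, hu]
        simp [h]
      · rw [dif_neg h, rename_X, hu]
        simp [h]
    rw [hfn]
  have heval : ∀ s ∈ S, MvPolynomial.eval (fun i => ((s i.1 : ℤ) : ℂ)) G = 0 := by
    intro s hsS
    have h1 : (fun i : σ' => ((s i.1 : ℤ) : ℂ)) = (fun i => ((s i : ℤ) : ℂ)) ∘ Subtype.val := rfl
    rw [h1, ← eval_rename, hren]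
    have h2 : eval (fun i => ((s i : ℤ) : ℂ)) (aeval u f)
        = eval (fun i => eval (fun j => ((s j : ℤ) : ℂ)) (u i)) f := by
      rw [aeval_def, algebraMap_eq,
        show (eval (fun i => ((s i : ℤ) : ℂ))) (eval₂ C u f)
          = (eval (fun i => ((s i : ℤ) : ℂ)) : MvPolynomial (Fin N) ℂ →+* ℂ) (eval₂ C u f) from rfl,
        eval₂_comp_left]
      have : ((eval (fun i => ((s i : ℤ) : ℂ)) : MvPolynomial (Fin N) ℂ →+* ℂ)).comp C
          = RingHom.id ℂ := by
        ext c
        simp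
      rw [this]
      rfl
    rw [h2]
    have h3 : (fun i => eval (fun j => ((s j : ℤ) : ℂ)) (u i))
        = fun i => ((s i : ℤ) : ℂ) := by
      funext i
      rw [hu]
      by_cases h : i = ⟨0, hN⟩
      · simp only [if_pos h, map_one]
        rw [h, h00 s hsS]
        norm_num
      · simp [if_neg h]
    rw [h3]
    exact hf s hsS
  have hG0 : G = 0 := part2 G heval
  show aeval u f = 0
  rw [← hren, hG0, map_zero]
end
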